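/- Let N be a finite group, σ an automorphism of N of prime order p, and M a σ-invariant subnormal subgroup of N. Suppose σ acts without nontrivial fixed points on each factor of some σ-invariant subnormal series from M up to N. Then for any σ-invariant subgroups S ◁ R with M ⊆ S ⊆ R ⊆ N, the automorphism σ acts fixed-point-freely on the quotient R/S. -/

import Mathlib

open Function

/-- Counting lemma: a permutation of order dividing a prime `p` on a finite set
has `card ≡ card fixed points [MOD p]`. -/
lemma modEq_card_fixed {α : Type*} [Finite α] {p : ℕ} (hp : p.Prime)
    (e : Equiv.Perm α) (he : e ^ p = 1) :
    Nat.card α ≡ Nat.card {q : α // e q = q} [MOD p] := by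
  haveI : Fact p.Prime := ⟨hp⟩
  set H := Subgroup.zpowers e with hH
  haveI : IsPGroup p H := by
    intro g
    refine ⟨1, ?_⟩
    obtain ⟨n, hn⟩ := Subgroup.mem_zpowers_iff.mp g.2
    have : ((g ^ p ^ 1 : H) : Equiv.Perm α) = 1 := by
      push_cast
      rw [← hn, pow_one, ← zpow_natCast, ← zpow_mul, mul_comm, zpow_mul, zpow_natCast, he,
        one_zpow]
    exact Subtype.ext this
  have hfix : Nat.card {q : α // e q = q} = Nat.card (MulAction.fixedPoints H α) := by
    apply Nat.card_congr
    apply Equiv.subtypeEquivRight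
    intro a
    simp only [MulAction.mem_fixedPoints]
    constructor
    · rintro ha ⟨g, hg⟩
      obtain ⟨n, hn⟩ := Subgroup.mem_zpowers_iff.mp hg
      have : IsFixedPt (⇑(e ^ n)) a := (show IsFixedPt e a from ha).perm_zpow n
      simpa [Subgroup.smul_def, hn, IsFixedPt] using this
    · intro h
      simpa [Subgroup.smul_def] using h ⟨e, Subgroup.mem_zpowers e⟩
  rw [hfix]
  exact (‹IsPGroup p H›).card_modEq_card_fixedPoints α

lemma exists_fixed_of_not_dvd {α : Type*} [Finite α] {p : ℕ} (hp : p.Prime)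
    (e : Equiv.Perm α) (he : e ^ p = 1) (hcard : ¬ p ∣ Nat.card α) :
    ∃ q : α, e q = q := by
  by_contra h
  push_neg at h
  have : IsEmpty {q : α // e q = q} := ⟨fun q => h q.1 q.2⟩
  have h0 : Nat.card {q : α // e q = q} = 0 := Nat.card_of_isEmpty
  have := modEq_card_fixed hp e he
  rw [h0] at this
  exact hcard ((Nat.modEq_zero_iff_dvd).mp this)

/-- `c 0 ⊴ c 1 ⊴ ⋯ ⊴ c r`: a chain of subgroups, each normal in the next. -/
def IsNormalChain {N : Type*} [Group N] (c : ℕ → Subgroup N) (r : ℕ) : Prop :=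
  ∀ i < r, c i ≤ c (i + 1) ∧ ∀ x ∈ c (i + 1), ∀ m ∈ c i, x * m * x⁻¹ ∈ c i

/-- Let `σ` be an automorphism of prime order `p` of a finite group `N`, and `M`
a `σ`-invariant subnormal subgroup such that `σ` acts fixed-point-freely on each
factor of some `σ`-invariant subnormal series from `M` to `N`. Then `σ` acts
fixed-point-freely on `R/S` for any `σ`-invariant `M ≤ S ⊴ R ≤ N`. -/
theorem stmt15 (N : Type*) [Group N] [Finite N] (p : ℕ) (hp : p.Prime)
    (σ : MulAut N) (hord : orderOf σ = p) (M : Subgroup N)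
    (hM : Subgroup.map σ.toMonoidHom M = M)
    (hser : ∃ (r : ℕ) (c : ℕ → Subgroup N),
      c 0 = M ∧ c r = ⊤ ∧ IsNormalChain c r ∧
      (∀ i ≤ r, Subgroup.map σ.toMonoidHom (c i) = c i) ∧
      (∀ i < r, ∀ x ∈ c (i + 1), σ x * x⁻¹ ∈ c i → x ∈ c i)) :
    ∀ R S : Subgroup N, M ≤ S → S ≤ R →
      (∀ x ∈ R, ∀ s ∈ S, x * s * x⁻¹ ∈ S) →
      Subgroup.map σ.toMonoidHom R = R → Subgroup.map σ.toMonoidHom S = S →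
      ∀ x ∈ R, σ x * x⁻¹ ∈ S → x ∈ S := by
  classical
  obtain ⟨r, c, hc0, hcr, hchain, hinv, hfpf⟩ := hser
  -- membership transfer for invariant subgroups
  have hmemof : ∀ (T : Subgroup N), Subgroup.map σ.toMonoidHom T = T →
      ∀ y : N, (σ y ∈ T ↔ y ∈ T) := by
    intro T hT y
    constructor
    · intro hy
      rw [← hT] at hy
      obtain ⟨z, hz, hzy⟩ := hy
      exact (σ.injective hzy) ▸ hz
    · intro hy
      rw [← hT]
      exact ⟨y, hy, rfl⟩
  have hMmem := hmemof M hM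
  -- M ≤ c i
  have hmono : ∀ i, i ≤ r → M ≤ c i := by
    intro i
    induction i with
    | zero => intro _; rw [hc0]
    | succ n ih =>
      intro hn
      exact (ih (Nat.le_of_succ_le hn)).trans (hchain n hn).1
  -- descent: σ acts fixed-point-freely on N relative to M
  have hdesc : ∀ y : N, σ y * y⁻¹ ∈ M → y ∈ M := by
    have key : ∀ j, j ≤ r → ∀ y ∈ c j, σ y * y⁻¹ ∈ M → y ∈ M := by
      intro j
      induction j with
      | zero => intro _ y hy _; rwa [hc0] at hy
      | succ n ih =>
        intro hn y hy hyM
        have h1 : σ y * y⁻¹ ∈ c n := hmono n (Nat.le_of_succ_le hn) hyM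
        exact ih (Nat.le_of_succ_le hn) y (hfpf n hn y hy h1) hyM
    intro y hy
    exact key r le_rfl y (by rw [hcr]; trivial) hy
  have hσp : σ ^ p = 1 := by rw [← hord]; exact pow_orderOf_eq_one σ
  have happly : ∀ (k : ℕ) (y : N), (σ ^ (k + 1)) y = σ ((σ ^ k) y) := by
    intro k y
    rw [pow_succ']
    rfl
  -- Step A : p does not divide the index of M
  let eM : Equiv.Perm (N ⧸ M) :=
    Quotient.congr σ.toEquiv (by
      intro a b
      rw [QuotientGroup.leftRel_apply, QuotientGroup.leftRel_apply]
      have h1 : (σ.toEquiv a)⁻¹ * σ.toEquiv b = σ (a⁻¹ * b) := by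
        simp [map_mul, map_inv]
      rw [h1]
      exact (hMmem _).symm)
  have heM : ∀ g : N, eM (QuotientGroup.mk g) = QuotientGroup.mk (σ g) := fun g => rfl
  have heMpow : ∀ (k : ℕ) (g : N),
      (eM ^ k) (QuotientGroup.mk g) = QuotientGroup.mk ((σ ^ k) g) := by
    intro k
    induction k with
    | zero => intro g; simp
    | succ n ih =>
      intro g
      rw [pow_succ', Equiv.Perm.mul_apply, ih, heM, happly]
  have heMp : eM ^ p = 1 := by
    ext q
    induction q using QuotientGroup.induction_on with
    | H g => rw [heMpow, hσp]; rfl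
  have hcard1 : Nat.card {q : N ⧸ M // eM q = q} = 1 := by
    rw [Nat.card_eq_one_iff_unique]
    constructor
    · constructor
      rintro ⟨q, hq⟩ ⟨q', hq'⟩
      have key : ∀ (q : N ⧸ M), eM q = q → q = QuotientGroup.mk (1 : N) := by
        intro q hq
        induction q using QuotientGroup.induction_on with
        | H g =>
          rw [heM, QuotientGroup.eq] at hq
          have hy : σ g⁻¹ * (g⁻¹)⁻¹ ∈ M := by
            simpa [map_inv] using hq
          have hg : g⁻¹ ∈ M := hdesc g⁻¹ hy
          rw [QuotientGroup.eq]
          simpa using hg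
      simp only [Subtype.mk.injEq]
      rw [key q hq, key q' hq']
    · refine ⟨⟨QuotientGroup.mk (1 : N), ?_⟩⟩
      show eM (QuotientGroup.mk 1) = QuotientGroup.mk 1
      rw [heM, map_one]
  have hmod1 : Nat.card (N ⧸ M) ≡ 1 [MOD p] := by
    have := modEq_card_fixed hp eM heMp
    rwa [hcard1] at this
  have hpindex : ¬ p ∣ M.index := by
    intro hdvd
    rw [Subgroup.index_eq_card] at hdvd
    have h01 : (0 : ℕ) ≡ 1 [MOD p] := (Nat.modEq_zero_iff_dvd.mpr hdvd).symm.trans hmod1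
    have : p ∣ 1 := by simpa using (Nat.modEq_iff_dvd' (by norm_num)).mp h01
    exact hp.one_lt.ne' (Nat.dvd_one.mp this)
  -- main argument
  intro R S hMS hSR hnorm hRinv hSinv x hxR hxS
  have hSmem := hmemof S hSinv
  have hrel : ¬ p ∣ M.relIndex S := fun h =>
    hpindex (h.trans (Subgroup.relIndex_dvd_index_of_le hMS))
  have hxS' : x⁻¹ * σ x ∈ S := by
    have h2 := hnorm x⁻¹ (inv_mem hxR) (σ x * x⁻¹) hxS
    have h3 : x⁻¹ * (σ x * x⁻¹) * x⁻¹⁻¹ = x⁻¹ * σ x := by group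
    rwa [h3] at h2
  have hpowS : ∀ (k : ℕ) (y : N), y ∈ S → (σ ^ k) y ∈ S := by
    intro k
    induction k with
    | zero => intro y hy; simpa using hy
    | succ n ih =>
      intro y hy
      rw [happly]
      exact (hSmem _).mpr (ih y hy)
  have hvS : ∀ k : ℕ, x⁻¹ * (σ ^ k) x ∈ S := by
    intro k
    induction k with
    | zero => simpa using S.one_mem
    | succ n ih =>
      have h1 : x⁻¹ * (σ ^ (n + 1)) x = (x⁻¹ * σ x) * σ (x⁻¹ * (σ ^ n) x) := by
        rw [happly, map_mul, map_inv]
        group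
      rw [h1]
      exact S.mul_mem hxS' ((hSmem _).mpr ih)
  set M' := M.subgroupOf S with hM'
  let u : S := ⟨x⁻¹ * σ x, hxS'⟩
  let eS : Equiv S S :=
    { toFun := fun s => u * ⟨σ s, (hSmem _).mpr s.2⟩
      invFun := fun s => ⟨σ.symm ((u : N)⁻¹ * s),
        (hSmem _).mp (by
          rw [MulEquiv.apply_symm_apply]
          exact S.mul_mem (inv_mem u.2) s.2)⟩
      left_inv := by
        intro s
        apply Subtype.ext
        simp only [Subgroup.coe_mul, InvMemClass.coe_inv, map_mul, map_inv,
          MulEquiv.symm_apply_apply]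
        group
      right_inv := by
        intro s
        apply Subtype.ext
        simp only [Subgroup.coe_mul, InvMemClass.coe_inv, map_mul, map_inv,
          MulEquiv.apply_symm_apply]
        group }
  have heScoe : ∀ s : S, ((eS s : S) : N) = x⁻¹ * σ x * σ s := fun s => rfl
  let F : Equiv.Perm (S ⧸ M') :=
    Quotient.congr eS (by
      intro a b
      rw [QuotientGroup.leftRel_apply, QuotientGroup.leftRel_apply,
        Subgroup.mem_subgroupOf, Subgroup.mem_subgroupOf]
      have hc : (((eS a)⁻¹ * eS b : S) : N) = σ ((a : N)⁻¹ * (b : N)) := by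
        push_cast
        rw [heScoe, heScoe, map_mul, map_inv]
        group
      rw [hc]
      exact (hMmem _).symm)
  have heF : ∀ s : S, F (QuotientGroup.mk s) = QuotientGroup.mk (eS s) := fun s => rfl
  have hFpow : ∀ (k : ℕ) (s t : S), (t : N) = x⁻¹ * (σ ^ k) x * (σ ^ k) (s : N) →
      (F ^ k) (QuotientGroup.mk s) = QuotientGroup.mk t := by
    intro k
    induction k with
    | zero =>
      intro s t ht
      have : t = s := by
        apply Subtype.ext
        simpa using ht
      rw [this]
      simp
    | succ n ih =>
      intro s t ht
      rw [pow_succ', Equiv.Perm.mul_apply,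
        ih s ⟨x⁻¹ * (σ ^ n) x * (σ ^ n) (s : N),
          S.mul_mem (hvS n) (hpowS n _ s.2)⟩ rfl, heF]
      congr 1
      apply Subtype.ext
      rw [heScoe, ht]
      show x⁻¹ * σ x * σ (x⁻¹ * (σ ^ n) x * (σ ^ n) (s : N)) =
        x⁻¹ * (σ ^ (n + 1)) x * (σ ^ (n + 1)) (s : N)
      rw [map_mul, map_mul, map_inv, happly n x, happly n (s : N)]
      group
  have hFp : F ^ p = 1 := by
    ext q
    induction q using QuotientGroup.induction_on with
    | H s =>
      rw [hFpow p s s (by rw [hσp]; simp)]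
      rfl
  have hcardS : ¬ p ∣ Nat.card (S ⧸ M') := by
    rw [← Subgroup.index_eq_card]
    exact hrel
  obtain ⟨q, hq⟩ := exists_fixed_of_not_dvd hp F hFp hcardS
  obtain ⟨s₀, rfl⟩ := QuotientGroup.mk_surjective q
  rw [heF, QuotientGroup.eq, Subgroup.mem_subgroupOf] at hq
  have hyM : σ (x * (s₀ : N))⁻¹ * ((x * (s₀ : N))⁻¹)⁻¹ ∈ M := by
    have hc : (((eS s₀)⁻¹ * s₀ : S) : N) = σ (x * (s₀ : N))⁻¹ * ((x * (s₀ : N))⁻¹)⁻¹ := by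
      push_cast
      rw [heScoe, map_inv, map_mul]
      group
    rwa [hc] at hq
  have h1 : (x * (s₀ : N))⁻¹ ∈ M := hdesc _ hyM
  have h2 : x * (s₀ : N) ∈ S := hMS ((inv_mem_iff).mp h1)
  have h3 : x = (x * (s₀ : N)) * (s₀ : N)⁻¹ := by group
  rw [h3]
  exact S.mul_mem h2 (inv_mem s₀.2)
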